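/- arXiv:2505.18752 — 2 statements merged into one kernel-verified Lean document; each statement's English description precedes it below -/
import Mathlib

section
/- (Theorem 1, inequality) If E y_A ≠ E y_B, then Acc ≤ S*. -/
open Finset

/-- The separability of the hidden states `h` (with labels `y`, label tokens `yA`, `yB`)
along the direction `u`. -/
noncomputable def sep {d n : ℕ} {V : Type*} [DecidableEq V]
    (h : Fin n → EuclideanSpace ℝ (Fin d)) (y : Fin n → V) (yA yB : V)
    (u : EuclideanSpace ℝ (Fin d)) : ℝ :=
  (1 / (n : ℝ)) *
    (((univ.filter fun i => y i = yA ∧ 0 ≤ (inner ℝ u (h i) : ℝ)).card : ℝ) +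
     ((univ.filter fun i => y i = yB ∧ (inner ℝ u (h i) : ℝ) < 0).card : ℝ))

/-- Index `i` is correctly classified (ties broken toward `yA`): either `y i = yA` and
`⟪E yA, h i⟫ ≥ ⟪E v, h i⟫` for all `v`, or `y i = yB` and `⟪E yB, h i⟫ ≥ ⟪E v, h i⟫`
for all `v` together with `⟪E yB, h i⟫ > ⟪E yA, h i⟫`. -/
def correct {d n : ℕ} {V : Type*} (E : V → EuclideanSpace ℝ (Fin d))
    (h : Fin n → EuclideanSpace ℝ (Fin d)) (y : Fin n → V) (yA yB : V)
    (i : Fin n) : Prop :=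
  (y i = yA ∧ ∀ v : V, (inner ℝ (E v) (h i) : ℝ) ≤ (inner ℝ (E yA) (h i) : ℝ)) ∨
  (y i = yB ∧ (∀ v : V, (inner ℝ (E v) (h i) : ℝ) ≤ (inner ℝ (E yB) (h i) : ℝ)) ∧
    (inner ℝ (E yA) (h i) : ℝ) < (inner ℝ (E yB) (h i) : ℝ))

noncomputable instance {d n : ℕ} {V : Type*} [Fintype V] [DecidableEq V]
    (E : V → EuclideanSpace ℝ (Fin d)) (h : Fin n → EuclideanSpace ℝ (Fin d))
    (y : Fin n → V) (yA yB : V) : DecidablePred (correct E h y yA yB) := fun i => by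
  unfold correct; infer_instance

/-- The accuracy `Acc = (1/n) · |{i | i is correctly classified}|`. -/
noncomputable def acc {d n : ℕ} {V : Type*} [Fintype V] [DecidableEq V]
    (E : V → EuclideanSpace ℝ (Fin d)) (h : Fin n → EuclideanSpace ℝ (Fin d))
    (y : Fin n → V) (yA yB : V) : ℝ :=
  (1 / (n : ℝ)) * ((univ.filter fun i => correct E h y yA yB i).card : ℝ)

/-- (Theorem 1, inequality) If `E yA ≠ E yB`, then `Acc ≤ S*`, where
`S* = sup {S(u) | ‖u‖ = 1}` is the maximum separability. -/
theorem stmt_3 {d n : ℕ} (hd : 1 ≤ d) (hn : 1 ≤ n)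
    {V : Type*} [Fintype V] [DecidableEq V]
    (E : V → EuclideanSpace ℝ (Fin d))
    (h : Fin n → EuclideanSpace ℝ (Fin d)) (y : Fin n → V)
    (yA yB : V) (hAB : yA ≠ yB) (hy : ∀ i, y i = yA ∨ y i = yB)
    (hE : E yA ≠ E yB) :
    acc E h y yA yB ≤
      sSup {r : ℝ | ∃ u : EuclideanSpace ℝ (Fin d), ‖u‖ = 1 ∧ sep h y yA yB u = r} := by
  have hnpos : (0 : ℝ) < n := by exact_mod_cast hn
  set w : EuclideanSpace ℝ (Fin d) := E yA - E yB with hw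
  have hwne : w ≠ 0 := sub_ne_zero.mpr hE
  have hwnorm : (0 : ℝ) < ‖w‖ := norm_pos_iff.mpr hwne
  set u : EuclideanSpace ℝ (Fin d) := ‖w‖⁻¹ • w with hu
  have hun : ‖u‖ = 1 := by
    rw [hu, norm_smul, norm_inv, norm_norm, inv_mul_cancel₀ hwnorm.ne']
  have hinner : ∀ i, (inner ℝ u (h i) : ℝ) = ‖w‖⁻¹ * (inner ℝ w (h i) : ℝ) := by
    intro i; rw [hu, real_inner_smul_left]
  have hbdd : BddAbove {r : ℝ | ∃ u : EuclideanSpace ℝ (Fin d),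
      ‖u‖ = 1 ∧ sep h y yA yB u = r} := by
    refine ⟨1, ?_⟩
    rintro r ⟨v, -, rfl⟩
    unfold sep
    rw [div_mul_eq_mul_div, one_mul, div_le_one hnpos]
    have hdisj : Disjoint
        (univ.filter fun i => y i = yA ∧ 0 ≤ (inner ℝ v (h i) : ℝ))
        (univ.filter fun i => y i = yB ∧ (inner ℝ v (h i) : ℝ) < 0) := by
      simp only [disjoint_left, mem_filter]
      rintro a ⟨-, ha, -⟩ ⟨-, hb, -⟩
      exact hAB (ha ▸ hb ▸ rfl)
    calc _ = ((((univ.filter fun i => y i = yA ∧ 0 ≤ (inner ℝ v (h i) : ℝ)) ∪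
          (univ.filter fun i => y i = yB ∧ (inner ℝ v (h i) : ℝ) < 0)).card : ℕ) : ℝ) := by
          rw [card_union_of_disjoint hdisj]; push_cast; ring
      _ ≤ ((Fintype.card (Fin n) : ℕ) : ℝ) := by
          exact_mod_cast card_le_card (subset_univ _)
      _ = n := by simp
  have hmem : sep h y yA yB u ∈ {r : ℝ | ∃ u : EuclideanSpace ℝ (Fin d),
      ‖u‖ = 1 ∧ sep h y yA yB u = r} := ⟨u, hun, rfl⟩
  refine le_trans ?_ (le_csSup hbdd hmem)
  unfold acc sep
  have hsub : (univ.filter fun i => correct E h y yA yB i) ⊆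
      (univ.filter fun i => y i = yA ∧ 0 ≤ (inner ℝ u (h i) : ℝ)) ∪
      (univ.filter fun i => y i = yB ∧ (inner ℝ u (h i) : ℝ) < 0) := by
    intro i hi
    simp only [mem_filter, mem_union, mem_univ, true_and] at hi ⊢
    rcases hi with ⟨hiA, hmax⟩ | ⟨hiB, hmax, hlt⟩
    · left
      refine ⟨hiA, ?_⟩
      rw [hinner]
      have hAB2 : (inner ℝ (E yB) (h i) : ℝ) ≤ (inner ℝ (E yA) (h i) : ℝ) := hmax yB
      have hwi : (0:ℝ) ≤ (inner ℝ w (h i) : ℝ) := by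
        rw [hw, inner_sub_left]; linarith
      positivity
    · right
      refine ⟨hiB, ?_⟩
      rw [hinner]
      have hwi : (inner ℝ w (h i) : ℝ) < 0 := by
        rw [hw, inner_sub_left]; linarith
      exact mul_neg_of_pos_of_neg (inv_pos.mpr hwnorm) hwi
  have hcard : ((univ.filter fun i => correct E h y yA yB i).card : ℝ) ≤
      ((univ.filter fun i => y i = yA ∧ 0 ≤ (inner ℝ u (h i) : ℝ)).card : ℝ) +
      ((univ.filter fun i => y i = yB ∧ (inner ℝ u (h i) : ℝ) < 0).card : ℝ) := by
    calc ((univ.filter fun i => correct E h y yA yB i).card : ℝ)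
        ≤ (((univ.filter fun i => y i = yA ∧ 0 ≤ (inner ℝ u (h i) : ℝ)) ∪
          (univ.filter fun i => y i = yB ∧ (inner ℝ u (h i) : ℝ) < 0)).card : ℝ) := by
          exact_mod_cast card_le_card hsub
      _ ≤ _ := by exact_mod_cast card_union_le _ _
  have h1n : (0:ℝ) ≤ 1 / (n:ℝ) := by positivity
  exact mul_le_mul_of_nonneg_left hcard h1n
end

section
/- (Theorem 1, equality case) Assume E y_A ≠ E y_B, assume that for every index i and every v ∈ V with v ∉ {y_A, y_B} one has ⟪E v, h i⟫ < max(⟪E y_A, h i⟫, ⟪E y_B, h i⟫), and assume the unit vector u₀ = (E y_A − E y_B)/‖E y_A − E y_B‖ attains the maximum separability, i.e. S(u₀) = S* (equivalently, u₀ is a positive scalar multiple of a maximizer u* of S). Then Acc = S*. -/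
open Finset

/-- (Theorem 1, equality case) Assume `E yA ≠ E yB`, assume every competitor token `v`
outside `{yA, yB}` satisfies `⟪E v, h i⟫ < max (⟪E yA, h i⟫) (⟪E yB, h i⟫)` for every `i`,
and assume the unit vector `u₀ = (E yA − E yB)/‖E yA − E yB‖` attains the maximum
separability `S* = sup {S(u) | ‖u‖ = 1}`.  Then `Acc = S*`. -/
theorem stmt_4 {d n : ℕ} (hd : 1 ≤ d) (hn : 1 ≤ n)
    {V : Type*} [Fintype V] [DecidableEq V]
    (E : V → EuclideanSpace ℝ (Fin d))
    (h : Fin n → EuclideanSpace ℝ (Fin d)) (y : Fin n → V)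
    (yA yB : V) (hAB : yA ≠ yB) (hy : ∀ i, y i = yA ∨ y i = yB)
    (hE : E yA ≠ E yB)
    (hdom : ∀ i : Fin n, ∀ v : V, v ≠ yA → v ≠ yB →
      (inner ℝ (E v) (h i) : ℝ) <
        max (inner ℝ (E yA) (h i) : ℝ) (inner ℝ (E yB) (h i) : ℝ))
    (hatt : sep h y yA yB (‖E yA - E yB‖⁻¹ • (E yA - E yB)) =
      sSup {r : ℝ | ∃ u : EuclideanSpace ℝ (Fin d), ‖u‖ = 1 ∧ sep h y yA yB u = r}) :
    acc E h y yA yB =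
      sSup {r : ℝ | ∃ u : EuclideanSpace ℝ (Fin d), ‖u‖ = 1 ∧ sep h y yA yB u = r} := by
  rw [← hatt]
  set u₀ : EuclideanSpace ℝ (Fin d) := ‖E yA - E yB‖⁻¹ • (E yA - E yB) with hu₀
  have hc : (0:ℝ) < ‖E yA - E yB‖ := by
    rw [norm_pos_iff]; exact sub_ne_zero.mpr hE
  have hinner : ∀ i : Fin n, (inner ℝ u₀ (h i) : ℝ) =
      ‖E yA - E yB‖⁻¹ * ((inner ℝ (E yA) (h i) : ℝ) - (inner ℝ (E yB) (h i) : ℝ)) := by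
    intro i
    rw [hu₀, real_inner_smul_left, inner_sub_left]
  have hpos : (0:ℝ) < ‖E yA - E yB‖⁻¹ := inv_pos.mpr hc
  have hsign : ∀ i : Fin n, (0 ≤ (inner ℝ u₀ (h i) : ℝ)) ↔
      (inner ℝ (E yB) (h i) : ℝ) ≤ (inner ℝ (E yA) (h i) : ℝ) := by
    intro i
    rw [hinner i, mul_nonneg_iff_of_pos_left hpos, sub_nonneg]
  have hsign' : ∀ i : Fin n, ((inner ℝ u₀ (h i) : ℝ) < 0) ↔
      (inner ℝ (E yA) (h i) : ℝ) < (inner ℝ (E yB) (h i) : ℝ) := by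
    intro i
    rw [hinner i]
    constructor
    · intro hlt
      nlinarith
    · intro hlt
      nlinarith
  have key : ∀ i : Fin n, correct E h y yA yB i ↔
      ((y i = yA ∧ 0 ≤ (inner ℝ u₀ (h i) : ℝ)) ∨
       (y i = yB ∧ (inner ℝ u₀ (h i) : ℝ) < 0)) := by
    intro i
    constructor
    · rintro (⟨hyi, hall⟩ | ⟨hyi, hall, hlt⟩)
      · exact Or.inl ⟨hyi, (hsign i).mpr (hall yB)⟩
      · exact Or.inr ⟨hyi, (hsign' i).mpr hlt⟩
    · rintro (⟨hyi, hle⟩ | ⟨hyi, hlt⟩)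
      · refine Or.inl ⟨hyi, fun v => ?_⟩
        by_cases hvA : v = yA
        · subst hvA; exact le_refl _
        by_cases hvB : v = yB
        · subst hvB; exact (hsign i).mp hle
        · have := hdom i v hvA hvB
          have hm : max (inner ℝ (E yA) (h i) : ℝ) (inner ℝ (E yB) (h i) : ℝ)
              = (inner ℝ (E yA) (h i) : ℝ) := max_eq_left ((hsign i).mp hle)
          exact le_of_lt (hm ▸ this)
      · have hlt' := (hsign' i).mp hlt
        refine Or.inr ⟨hyi, fun v => ?_, hlt'⟩
        by_cases hvA : v = yA
        · subst hvA; exact le_of_lt hlt'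
        by_cases hvB : v = yB
        · subst hvB; exact le_refl _
        · have := hdom i v hvA hvB
          have hm : max (inner ℝ (E yA) (h i) : ℝ) (inner ℝ (E yB) (h i) : ℝ)
              = (inner ℝ (E yB) (h i) : ℝ) := max_eq_right (le_of_lt hlt')
          exact le_of_lt (hm ▸ this)
  have hset : (univ.filter fun i => correct E h y yA yB i) =
      (univ.filter fun i => y i = yA ∧ 0 ≤ (inner ℝ u₀ (h i) : ℝ)) ∪
      (univ.filter fun i => y i = yB ∧ (inner ℝ u₀ (h i) : ℝ) < 0) := by
    ext i
    simp [key i, and_or_left]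
  have hdisj : Disjoint
      (univ.filter fun i => y i = yA ∧ 0 ≤ (inner ℝ u₀ (h i) : ℝ))
      (univ.filter fun i => y i = yB ∧ (inner ℝ u₀ (h i) : ℝ) < 0) := by
    rw [Finset.disjoint_left]
    intro i hi1 hi2
    simp only [mem_filter] at hi1 hi2
    exact hAB (hi1.2.1 ▸ hi2.2.1 ▸ rfl : yA = yB)
  unfold acc sep
  rw [hset, card_union_of_disjoint hdisj]
  push_cast
  ring
end
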